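/- Let c₁ = a³, c₂ = b³, c₃ = c³, c₄ = a(b²−c²), c₅ = b(a²−c²), c₆ = c(a²−b²) in ℂ[a,b,c], and let H(α,β,γ) be the 6×6 matrix of all second-order partial derivatives of c₁,…,c₆ (columns indexed by the pairs (a,a),(b,b),(c,c),(a,b),(a,c),(b,c)) evaluated at (α,β,γ). Let Z be the B₃ configuration with representatives (1,0,0), (0,1,0), (0,0,1), (1,1,0), (1,−1,0), (1,0,1), (1,0,−1), (0,1,1), (0,1,−1). Then for every (α,β,γ) ∈ ℂ³ \ {0} that is not a scalar multiple of one of the nine points of Z, the matrix H(α,β,γ) has rank exactly 5, while at each point of Z (i.e. (α,β,γ) a nonzero scalar multiple of one of the nine representatives) its rank is exactly 4. (Equivalently, dim Osc²_Q(X_{B₃}') = 4 for all Q ∉ Z and = 3 for Q ∈ Z.) -/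

import Mathlib

open MvPolynomial

/-- The six cubics a³, b³, c³, a(b²−c²), b(a²−c²), c(a²−b²) defining the
companion B₃ surface (variables a, b, c as X 0, X 1, X 2). -/
noncomputable def companionCubics : Fin 6 → MvPolynomial (Fin 3) ℂ :=
  ![X 0 ^ 3, X 1 ^ 3, X 2 ^ 3,
    X 0 * (X 1 ^ 2 - X 2 ^ 2), X 1 * (X 0 ^ 2 - X 2 ^ 2), X 2 * (X 0 ^ 2 - X 1 ^ 2)]

/-- The six unordered pairs of variables (a,a),(b,b),(c,c),(a,b),(a,c),(b,c). -/
def varPairs : Fin 6 → Fin 3 × Fin 3 :=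
  ![(0, 0), (1, 1), (2, 2), (0, 1), (0, 2), (1, 2)]

/-- The 6×6 matrix of all second-order partial derivatives of the six companion
cubics, evaluated at a point of ℂ³. -/
noncomputable def companionHessian (v : Fin 3 → ℂ) : Matrix (Fin 6) (Fin 6) ℂ :=
  Matrix.of fun i j =>
    eval v (pderiv (varPairs j).1 (pderiv (varPairs j).2 (companionCubics i)))

/-- The nine points of the B₃ configuration in ℂ³. -/
noncomputable def B3points : Fin 9 → (Fin 3 → ℂ) :=
  ![![1, 0, 0], ![0, 1, 0], ![0, 0, 1],
    ![1, 1, 0], ![1, -1, 0], ![1, 0, 1],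
    ![1, 0, -1], ![0, 1, 1], ![0, 1, -1]]


/-! ### Auxiliary machinery -/

/-- The explicit 6×6 matrix of second partials at `(a,b,c)`. -/
noncomputable def Hmat (a b c : ℂ) : Matrix (Fin 6) (Fin 6) ℂ :=
  !![6*a,0,0,0,0,0; 0,6*b,0,0,0,0; 0,0,6*c,0,0,0;
     0,2*a,-2*a,2*b,-2*c,0; 2*b,0,-2*b,2*a,0,-2*c; 2*c,-2*c,0,0,2*a,-2*b]

lemma pderiv_natCast' (i : Fin 3) (n : ℕ) :
    pderiv i ((n : ℕ) : MvPolynomial (Fin 3) ℂ) = 0 := by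
  rw [← map_natCast (C : ℂ →+* MvPolynomial (Fin 3) ℂ) n]
  exact pderiv_C

lemma pderiv_two' (i : Fin 3) : pderiv i (2 : MvPolynomial (Fin 3) ℂ) = 0 := by
  rw [← map_ofNat (C : ℂ →+* MvPolynomial (Fin 3) ℂ) 2]; exact pderiv_C

lemma pderiv_three' (i : Fin 3) : pderiv i (3 : MvPolynomial (Fin 3) ℂ) = 0 := by
  rw [← map_ofNat (C : ℂ →+* MvPolynomial (Fin 3) ℂ) 3]; exact pderiv_C

lemma cons_val_five' {α : Type*} (x : α) (u : Fin 5 → α) : Matrix.vecCons x u 5 = u 4 := rfl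

set_option maxHeartbeats 1000000 in
lemma hessian_eq (v : Fin 3 → ℂ) : companionHessian v = Hmat (v 0) (v 1) (v 2) := by
  ext i j
  fin_cases i <;> fin_cases j <;>
    simp [companionHessian, companionCubics, varPairs, Hmat, pderiv_mul, pderiv_pow,
      pderiv_X, pderiv_two', pderiv_three', pderiv_natCast', Pi.single_apply, cons_val_five',
      Matrix.cons_val_four, Matrix.cons_val_three, Matrix.cons_val_two] <;> ring

lemma rank_submatrix_le' {k : ℕ} (M : Matrix (Fin 6) (Fin 6) ℂ) (f g : Fin k → Fin 6) :
    (M.submatrix f g).rank ≤ M.rank := by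
  have h : M.submatrix f g =
      ((1 : Matrix (Fin 6) (Fin 6) ℂ).submatrix f (Equiv.refl (Fin 6))) * M *
        ((1 : Matrix (Fin 6) (Fin 6) ℂ).submatrix (Equiv.refl (Fin 6)) g) := by
    rw [Matrix.one_submatrix_mul, Matrix.mul_submatrix_one]
    simp
  rw [h]
  exact (Matrix.rank_mul_le_left _ _).trans (Matrix.rank_mul_le_right _ _)

lemma le_rank_of_submatrix {k : ℕ} (M : Matrix (Fin 6) (Fin 6) ℂ) (f g : Fin k → Fin 6)
    (h : (M.submatrix f g).det ≠ 0) : k ≤ M.rank := by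
  have h1 : (M.submatrix f g).rank = k := by
    rw [Matrix.rank_of_isUnit _ ((Matrix.isUnit_iff_isUnit_det _).2 (isUnit_iff_ne_zero.2 h))]
    simp
  rw [← h1]
  exact rank_submatrix_le' M f g

lemma rank_le_five_of_mulVec {M : Matrix (Fin 6) (Fin 6) ℂ} {w : Fin 6 → ℂ}
    (hw : w ≠ 0) (h : M.mulVec w = 0) : M.rank ≤ 5 := by
  have h2 := LinearMap.finrank_range_add_finrank_ker (M.mulVecLin)
  have h3 : 0 < Module.finrank ℂ (LinearMap.ker M.mulVecLin) := by
    rw [Module.finrank_pos_iff]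
    refine ⟨⟨⟨w, by simpa using h⟩, 0, ?_⟩⟩
    simp [Subtype.ext_iff, hw]
  have h4 : Module.finrank ℂ (Fin 6 → ℂ) = 6 := by simp
  rw [h4] at h2
  rw [Matrix.rank]
  omega

lemma rank_le_four_of_factor (M : Matrix (Fin 6) (Fin 6) ℂ) (P : Matrix (Fin 6) (Fin 4) ℂ)
    (Q : Matrix (Fin 4) (Fin 6) ℂ) (h : M = P * Q) : M.rank ≤ 4 := by
  rw [h]
  exact (Matrix.rank_mul_le_left P Q).trans (by simpa using Matrix.rank_le_card_width P)

lemma rank_smul_eq' {t : ℂ} (ht : t ≠ 0) (M : Matrix (Fin 6) (Fin 6) ℂ) :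
    (t • M).rank = M.rank := by
  have h : t • M = (t • (1 : Matrix (Fin 6) (Fin 6) ℂ)) * M := by
    rw [Matrix.smul_mul, Matrix.one_mul]
  rw [h]
  apply Matrix.rank_mul_eq_right_of_isUnit_det
  have hd : (t • (1 : Matrix (Fin 6) (Fin 6) ℂ)).det = t ^ 6 := by
    simp [Matrix.det_smul]
  rw [hd]
  exact isUnit_iff_ne_zero.2 (pow_ne_zero 6 ht)

lemma Hmat_smul (t a b c : ℂ) : Hmat (t*a) (t*b) (t*c) = t • Hmat a b c := by
  ext i j
  fin_cases i <;> fin_cases j <;>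
    simp [Hmat, cons_val_five', Matrix.cons_val_four, Matrix.cons_val_three,
      Matrix.cons_val_two] <;> ring

lemma vec3_eq (v w : Fin 3 → ℂ) (h0 : v 0 = w 0) (h1 : v 1 = w 1) (h2 : v 2 = w 2) :
    v = w := by
  funext j
  fin_cases j <;> assumption

/-! ### Kernel vectors -/

lemma kerA (a b c : ℂ) : (Hmat a b c).mulVec ![0,0,0, a*c, a*b, a^2] = 0 := by
  funext i
  fin_cases i <;>
    simp [Hmat, Matrix.mulVec, dotProduct, Fin.sum_univ_six, Matrix.vecHead,
      Matrix.vecTail, cons_val_five', Matrix.cons_val_four, Matrix.cons_val_three,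
      Matrix.cons_val_two] <;> ring

lemma kerB (a b c : ℂ) : (Hmat a b c).mulVec ![0,0,0, b*c, b^2, a*b] = 0 := by
  funext i
  fin_cases i <;>
    simp [Hmat, Matrix.mulVec, dotProduct, Fin.sum_univ_six, Matrix.vecHead,
      Matrix.vecTail, cons_val_five', Matrix.cons_val_four, Matrix.cons_val_three,
      Matrix.cons_val_two] <;> ring

lemma wA_ne {a : ℂ} (ha : a ≠ 0) (b c : ℂ) : (![0,0,0, a*c, a*b, a^2] : Fin 6 → ℂ) ≠ 0 := by
  intro h
  exact pow_ne_zero 2 ha (by simpa [cons_val_five'] using congrFun h 5)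

lemma wB_ne {b : ℂ} (hb : b ≠ 0) (a c : ℂ) : (![0,0,0, b*c, b^2, a*b] : Fin 6 → ℂ) ≠ 0 := by
  intro h
  exact pow_ne_zero 2 hb (by simpa using congrFun h 4)

/-! ### 5×5 minors -/

set_option maxHeartbeats 1000000 in
lemma det5A (a b c : ℂ) :
    ((Hmat a b c).submatrix ![0,1,2,4,5] ![0,1,2,4,5]).det = 864*a^2*b*c^2 := by
  have h : (Hmat a b c).submatrix ![0,1,2,4,5] ![0,1,2,4,5] =
      !![6*a,0,0,0,0; 0,6*b,0,0,0; 0,0,6*c,0,0; 2*b,0,-2*b,0,-2*c; 2*c,-2*c,0,2*a,-2*b] := by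
    ext i j
    fin_cases i <;> fin_cases j <;> rfl
  rw [h]
  simp [Matrix.det_succ_row_zero, Fin.sum_univ_succ, Fin.succAbove,
    Matrix.det_fin_three]
  ring

set_option maxHeartbeats 1000000 in
lemma det5B (a b c : ℂ) :
    ((Hmat a b c).submatrix ![1,2,3,4,5] ![0,1,2,3,5]).det = 288*b^2*c*(b-c)*(b+c) := by
  have h : (Hmat a b c).submatrix ![1,2,3,4,5] ![0,1,2,3,5] =
      !![0,6*b,0,0,0; 0,0,6*c,0,0; 0,2*a,-2*a,2*b,0; 2*b,0,-2*b,2*a,-2*c; 2*c,-2*c,0,0,-2*b] := by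
    ext i j
    fin_cases i <;> fin_cases j <;> rfl
  rw [h]
  simp [Matrix.det_succ_row_zero, Fin.sum_univ_succ, Fin.succAbove,
    Matrix.det_fin_three]
  ring

set_option maxHeartbeats 1000000 in
lemma det5C (a b c : ℂ) :
    ((Hmat a b c).submatrix ![0,2,3,4,5] ![0,1,2,3,4]).det = 288*a^2*c*(c-a)*(c+a) := by
  have h : (Hmat a b c).submatrix ![0,2,3,4,5] ![0,1,2,3,4] =
      !![6*a,0,0,0,0; 0,0,6*c,0,0; 0,2*a,-2*a,2*b,-2*c; 2*b,0,-2*b,2*a,0; 2*c,-2*c,0,0,2*a] := by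
    ext i j
    fin_cases i <;> fin_cases j <;> rfl
  rw [h]
  simp [Matrix.det_succ_row_zero, Fin.sum_univ_succ, Fin.succAbove,
    Matrix.det_fin_three]
  ring

set_option maxHeartbeats 1000000 in
lemma det5D (a b c : ℂ) :
    ((Hmat a b c).submatrix ![0,1,3,4,5] ![0,1,2,3,4]).det = 288*a^2*b*(b-a)*(b+a) := by
  have h : (Hmat a b c).submatrix ![0,1,3,4,5] ![0,1,2,3,4] =
      !![6*a,0,0,0,0; 0,6*b,0,0,0; 0,2*a,-2*a,2*b,-2*c; 2*b,0,-2*b,2*a,0; 2*c,-2*c,0,0,2*a] := by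
    ext i j
    fin_cases i <;> fin_cases j <;> rfl
  rw [h]
  simp [Matrix.det_succ_row_zero, Fin.sum_univ_succ, Fin.succAbove,
    Matrix.det_fin_three]
  ring

lemma B3_0 : B3points 0 = ![1, 0, 0] := rfl
lemma B3_1 : B3points 1 = ![0, 1, 0] := rfl
lemma B3_2 : B3points 2 = ![0, 0, 1] := rfl
lemma B3_3 : B3points 3 = ![1, 1, 0] := rfl
lemma B3_4 : B3points 4 = ![1, -1, 0] := rfl
lemma B3_5 : B3points 5 = ![1, 0, 1] := rfl
lemma B3_6 : B3points 6 = ![1, 0, -1] := rfl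
lemma B3_7 : B3points 7 = ![0, 1, 1] := rfl
lemma B3_8 : B3points 8 = ![0, 1, -1] := rfl

/-! ### Ranks at the nine configuration points -/

set_option maxHeartbeats 2000000 in
lemma rankP0 : (Hmat 1 0 0).rank = 4 := by
  apply le_antisymm
  · apply rank_le_four_of_factor _ (!![1, 0, 0, 0; 0, 0, 0, 0; 0, 0, 0, 0; 0, 1, 0, 0; 0, 0, 1, 0; 0, 0, 0, 1] : Matrix (Fin 6) (Fin 4) ℂ) (!![6, 0, 0, 0, 0, 0; 0, 2, (-2), 0, 0, 0; 0, 0, 0, 2, 0, 0; 0, 0, 0, 0, 2, 0] : Matrix (Fin 4) (Fin 6) ℂ)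
    ext i j
    fin_cases i <;> fin_cases j <;>
      simp [Hmat, Matrix.mul_apply, Fin.sum_univ_four, Matrix.vecHead, Matrix.vecTail,
        cons_val_five', Matrix.cons_val_four, Matrix.cons_val_three, Matrix.cons_val_two] <;>
      norm_num
  · apply le_rank_of_submatrix _ ![0, 3, 4, 5] ![0, 1, 3, 4]
    have h : (Hmat 1 0 0).submatrix ![0, 3, 4, 5] ![0, 1, 3, 4] = (!![6, 0, 0, 0; 0, 2, 0, 0; 0, 0, 2, 0; 0, 0, 0, 2] : Matrix (Fin 4) (Fin 4) ℂ) := by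
      ext i j
      fin_cases i <;> fin_cases j <;>
        norm_num [Hmat, Matrix.vecHead, Matrix.vecTail, cons_val_five', Matrix.cons_val_four,
          Matrix.cons_val_three, Matrix.cons_val_two]
    rw [h]
    simp [Matrix.det_succ_row_zero, Fin.sum_univ_succ, Fin.succAbove,
      Matrix.det_fin_three]

set_option maxHeartbeats 2000000 in
lemma rankP1 : (Hmat 0 1 0).rank = 4 := by
  apply le_antisymm
  · apply rank_le_four_of_factor _ (!![0, 0, 0, 0; 1, 0, 0, 0; 0, 0, 0, 0; 0, 1, 0, 0; 0, 0, 1, 0; 0, 0, 0, 1] : Matrix (Fin 6) (Fin 4) ℂ) (!![0, 6, 0, 0, 0, 0; 0, 0, 0, 2, 0, 0; 2, 0, (-2), 0, 0, 0; 0, 0, 0, 0, 0, (-2)] : Matrix (Fin 4) (Fin 6) ℂ)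
    ext i j
    fin_cases i <;> fin_cases j <;>
      simp [Hmat, Matrix.mul_apply, Fin.sum_univ_four, Matrix.vecHead, Matrix.vecTail,
        cons_val_five', Matrix.cons_val_four, Matrix.cons_val_three, Matrix.cons_val_two] <;>
      norm_num
  · apply le_rank_of_submatrix _ ![1, 3, 4, 5] ![0, 1, 3, 5]
    have h : (Hmat 0 1 0).submatrix ![1, 3, 4, 5] ![0, 1, 3, 5] = (!![0, 6, 0, 0; 0, 0, 2, 0; 2, 0, 0, 0; 0, 0, 0, (-2)] : Matrix (Fin 4) (Fin 4) ℂ) := by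
      ext i j
      fin_cases i <;> fin_cases j <;>
        norm_num [Hmat, Matrix.vecHead, Matrix.vecTail, cons_val_five', Matrix.cons_val_four,
          Matrix.cons_val_three, Matrix.cons_val_two]
    rw [h]
    simp [Matrix.det_succ_row_zero, Fin.sum_univ_succ, Fin.succAbove,
      Matrix.det_fin_three]

set_option maxHeartbeats 2000000 in
lemma rankP2 : (Hmat 0 0 1).rank = 4 := by
  apply le_antisymm
  · apply rank_le_four_of_factor _ (!![0, 0, 0, 0; 0, 0, 0, 0; 1, 0, 0, 0; 0, 1, 0, 0; 0, 0, 1, 0; 0, 0, 0, 1] : Matrix (Fin 6) (Fin 4) ℂ) (!![0, 0, 6, 0, 0, 0; 0, 0, 0, 0, (-2), 0; 0, 0, 0, 0, 0, (-2); 2, (-2), 0, 0, 0, 0] : Matrix (Fin 4) (Fin 6) ℂ)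
    ext i j
    fin_cases i <;> fin_cases j <;>
      simp [Hmat, Matrix.mul_apply, Fin.sum_univ_four, Matrix.vecHead, Matrix.vecTail,
        cons_val_five', Matrix.cons_val_four, Matrix.cons_val_three, Matrix.cons_val_two] <;>
      norm_num
  · apply le_rank_of_submatrix _ ![2, 3, 4, 5] ![0, 2, 4, 5]
    have h : (Hmat 0 0 1).submatrix ![2, 3, 4, 5] ![0, 2, 4, 5] = (!![0, 6, 0, 0; 0, 0, (-2), 0; 0, 0, 0, (-2); 2, 0, 0, 0] : Matrix (Fin 4) (Fin 4) ℂ) := by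
      ext i j
      fin_cases i <;> fin_cases j <;>
        norm_num [Hmat, Matrix.vecHead, Matrix.vecTail, cons_val_five', Matrix.cons_val_four,
          Matrix.cons_val_three, Matrix.cons_val_two]
    rw [h]
    simp [Matrix.det_succ_row_zero, Fin.sum_univ_succ, Fin.succAbove,
      Matrix.det_fin_three]

set_option maxHeartbeats 2000000 in
lemma rankP3 : (Hmat 1 1 0).rank = 4 := by
  apply le_antisymm
  · apply rank_le_four_of_factor _ (!![1, 0, 0, 0; 0, 1, 0, 0; 0, 0, 0, 0; 0, 0, 1, 0; (1/3 : ℂ), (-(1/3) : ℂ), 1, 0; 0, 0, 0, 1] : Matrix (Fin 6) (Fin 4) ℂ) (!![6, 0, 0, 0, 0, 0; 0, 6, 0, 0, 0, 0; 0, 2, (-2), 2, 0, 0; 0, 0, 0, 0, 2, (-2)] : Matrix (Fin 4) (Fin 6) ℂ)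
    ext i j
    fin_cases i <;> fin_cases j <;>
      simp [Hmat, Matrix.mul_apply, Fin.sum_univ_four, Matrix.vecHead, Matrix.vecTail,
        cons_val_five', Matrix.cons_val_four, Matrix.cons_val_three, Matrix.cons_val_two] <;>
      norm_num
  · apply le_rank_of_submatrix _ ![0, 1, 3, 5] ![0, 1, 2, 4]
    have h : (Hmat 1 1 0).submatrix ![0, 1, 3, 5] ![0, 1, 2, 4] = (!![6, 0, 0, 0; 0, 6, 0, 0; 0, 2, (-2), 0; 0, 0, 0, 2] : Matrix (Fin 4) (Fin 4) ℂ) := by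
      ext i j
      fin_cases i <;> fin_cases j <;>
        norm_num [Hmat, Matrix.vecHead, Matrix.vecTail, cons_val_five', Matrix.cons_val_four,
          Matrix.cons_val_three, Matrix.cons_val_two]
    rw [h]
    simp [Matrix.det_succ_row_zero, Fin.sum_univ_succ, Fin.succAbove,
      Matrix.det_fin_three]

set_option maxHeartbeats 2000000 in
lemma rankP4 : (Hmat 1 (-1) 0).rank = 4 := by
  apply le_antisymm
  · apply rank_le_four_of_factor _ (!![1, 0, 0, 0; 0, 1, 0, 0; 0, 0, 0, 0; 0, 0, 1, 0; (-(1/3) : ℂ), (-(1/3) : ℂ), (-1), 0; 0, 0, 0, 1] : Matrix (Fin 6) (Fin 4) ℂ) (!![6, 0, 0, 0, 0, 0; 0, (-6), 0, 0, 0, 0; 0, 2, (-2), (-2), 0, 0; 0, 0, 0, 0, 2, 2] : Matrix (Fin 4) (Fin 6) ℂ)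
    ext i j
    fin_cases i <;> fin_cases j <;>
      simp [Hmat, Matrix.mul_apply, Fin.sum_univ_four, Matrix.vecHead, Matrix.vecTail,
        cons_val_five', Matrix.cons_val_four, Matrix.cons_val_three, Matrix.cons_val_two] <;>
      norm_num
  · apply le_rank_of_submatrix _ ![0, 1, 3, 5] ![0, 1, 2, 4]
    have h : (Hmat 1 (-1) 0).submatrix ![0, 1, 3, 5] ![0, 1, 2, 4] = (!![6, 0, 0, 0; 0, (-6), 0, 0; 0, 2, (-2), 0; 0, 0, 0, 2] : Matrix (Fin 4) (Fin 4) ℂ) := by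
      ext i j
      fin_cases i <;> fin_cases j <;>
        norm_num [Hmat, Matrix.vecHead, Matrix.vecTail, cons_val_five', Matrix.cons_val_four,
          Matrix.cons_val_three, Matrix.cons_val_two]
    rw [h]
    simp [Matrix.det_succ_row_zero, Fin.sum_univ_succ, Fin.succAbove,
      Matrix.det_fin_three]

set_option maxHeartbeats 2000000 in
lemma rankP5 : (Hmat 1 0 1).rank = 4 := by
  apply le_antisymm
  · apply rank_le_four_of_factor _ (!![1, 0, 0, 0; 0, 0, 0, 0; 0, 1, 0, 0; 0, 0, 1, 0; 0, 0, 0, 1; (1/3 : ℂ), (-(1/3) : ℂ), (-1), 0] : Matrix (Fin 6) (Fin 4) ℂ) (!![6, 0, 0, 0, 0, 0; 0, 0, 6, 0, 0, 0; 0, 2, (-2), 0, (-2), 0; 0, 0, 0, 2, 0, (-2)] : Matrix (Fin 4) (Fin 6) ℂ)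
    ext i j
    fin_cases i <;> fin_cases j <;>
      simp [Hmat, Matrix.mul_apply, Fin.sum_univ_four, Matrix.vecHead, Matrix.vecTail,
        cons_val_five', Matrix.cons_val_four, Matrix.cons_val_three, Matrix.cons_val_two] <;>
      norm_num
  · apply le_rank_of_submatrix _ ![0, 2, 3, 4] ![0, 1, 2, 3]
    have h : (Hmat 1 0 1).submatrix ![0, 2, 3, 4] ![0, 1, 2, 3] = (!![6, 0, 0, 0; 0, 0, 6, 0; 0, 2, (-2), 0; 0, 0, 0, 2] : Matrix (Fin 4) (Fin 4) ℂ) := by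
      ext i j
      fin_cases i <;> fin_cases j <;>
        norm_num [Hmat, Matrix.vecHead, Matrix.vecTail, cons_val_five', Matrix.cons_val_four,
          Matrix.cons_val_three, Matrix.cons_val_two]
    rw [h]
    simp [Matrix.det_succ_row_zero, Fin.sum_univ_succ, Fin.succAbove,
      Matrix.det_fin_three]

set_option maxHeartbeats 2000000 in
lemma rankP6 : (Hmat 1 0 (-1)).rank = 4 := by
  apply le_antisymm
  · apply rank_le_four_of_factor _ (!![1, 0, 0, 0; 0, 0, 0, 0; 0, 1, 0, 0; 0, 0, 1, 0; 0, 0, 0, 1; (-(1/3) : ℂ), (-(1/3) : ℂ), 1, 0] : Matrix (Fin 6) (Fin 4) ℂ) (!![6, 0, 0, 0, 0, 0; 0, 0, (-6), 0, 0, 0; 0, 2, (-2), 0, 2, 0; 0, 0, 0, 2, 0, 2] : Matrix (Fin 4) (Fin 6) ℂ)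
    ext i j
    fin_cases i <;> fin_cases j <;>
      simp [Hmat, Matrix.mul_apply, Fin.sum_univ_four, Matrix.vecHead, Matrix.vecTail,
        cons_val_five', Matrix.cons_val_four, Matrix.cons_val_three, Matrix.cons_val_two] <;>
      norm_num
  · apply le_rank_of_submatrix _ ![0, 2, 3, 4] ![0, 1, 2, 3]
    have h : (Hmat 1 0 (-1)).submatrix ![0, 2, 3, 4] ![0, 1, 2, 3] = (!![6, 0, 0, 0; 0, 0, (-6), 0; 0, 2, (-2), 0; 0, 0, 0, 2] : Matrix (Fin 4) (Fin 4) ℂ) := by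
      ext i j
      fin_cases i <;> fin_cases j <;>
        norm_num [Hmat, Matrix.vecHead, Matrix.vecTail, cons_val_five', Matrix.cons_val_four,
          Matrix.cons_val_three, Matrix.cons_val_two]
    rw [h]
    simp [Matrix.det_succ_row_zero, Fin.sum_univ_succ, Fin.succAbove,
      Matrix.det_fin_three]

set_option maxHeartbeats 2000000 in
lemma rankP7 : (Hmat 0 1 1).rank = 4 := by
  apply le_antisymm
  · apply rank_le_four_of_factor _ (!![0, 0, 0, 0; 1, 0, 0, 0; 0, 1, 0, 0; 0, 0, 1, 0; 0, 0, 0, 1; (-(1/3) : ℂ), (1/3 : ℂ), 0, 1] : Matrix (Fin 6) (Fin 4) ℂ) (!![0, 6, 0, 0, 0, 0; 0, 0, 6, 0, 0, 0; 0, 0, 0, 2, (-2), 0; 2, 0, (-2), 0, 0, (-2)] : Matrix (Fin 4) (Fin 6) ℂ)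
    ext i j
    fin_cases i <;> fin_cases j <;>
      simp [Hmat, Matrix.mul_apply, Fin.sum_univ_four, Matrix.vecHead, Matrix.vecTail,
        cons_val_five', Matrix.cons_val_four, Matrix.cons_val_three, Matrix.cons_val_two] <;>
      norm_num
  · apply le_rank_of_submatrix _ ![1, 2, 3, 4] ![0, 1, 2, 3]
    have h : (Hmat 0 1 1).submatrix ![1, 2, 3, 4] ![0, 1, 2, 3] = (!![0, 6, 0, 0; 0, 0, 6, 0; 0, 0, 0, 2; 2, 0, (-2), 0] : Matrix (Fin 4) (Fin 4) ℂ) := by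
      ext i j
      fin_cases i <;> fin_cases j <;>
        norm_num [Hmat, Matrix.vecHead, Matrix.vecTail, cons_val_five', Matrix.cons_val_four,
          Matrix.cons_val_three, Matrix.cons_val_two]
    rw [h]
    simp [Matrix.det_succ_row_zero, Fin.sum_univ_succ, Fin.succAbove,
      Matrix.det_fin_three]

set_option maxHeartbeats 2000000 in
lemma rankP8 : (Hmat 0 1 (-1)).rank = 4 := by
  apply le_antisymm
  · apply rank_le_four_of_factor _ (!![0, 0, 0, 0; 1, 0, 0, 0; 0, 1, 0, 0; 0, 0, 1, 0; 0, 0, 0, 1; (1/3 : ℂ), (1/3 : ℂ), 0, (-1)] : Matrix (Fin 6) (Fin 4) ℂ) (!![0, 6, 0, 0, 0, 0; 0, 0, (-6), 0, 0, 0; 0, 0, 0, 2, 2, 0; 2, 0, (-2), 0, 0, 2] : Matrix (Fin 4) (Fin 6) ℂ)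
    ext i j
    fin_cases i <;> fin_cases j <;>
      simp [Hmat, Matrix.mul_apply, Fin.sum_univ_four, Matrix.vecHead, Matrix.vecTail,
        cons_val_five', Matrix.cons_val_four, Matrix.cons_val_three, Matrix.cons_val_two] <;>
      norm_num
  · apply le_rank_of_submatrix _ ![1, 2, 3, 4] ![0, 1, 2, 3]
    have h : (Hmat 0 1 (-1)).submatrix ![1, 2, 3, 4] ![0, 1, 2, 3] = (!![0, 6, 0, 0; 0, 0, (-6), 0; 0, 0, 0, 2; 2, 0, (-2), 0] : Matrix (Fin 4) (Fin 4) ℂ) := by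
      ext i j
      fin_cases i <;> fin_cases j <;>
        norm_num [Hmat, Matrix.vecHead, Matrix.vecTail, cons_val_five', Matrix.cons_val_four,
          Matrix.cons_val_three, Matrix.cons_val_two]
    rw [h]
    simp [Matrix.det_succ_row_zero, Fin.sum_univ_succ, Fin.succAbove,
      Matrix.det_fin_three]

set_option maxHeartbeats 1000000 in
/-- The matrix of second-order partials of the six companion cubics has rank
exactly 5 at every nonzero point of ℂ³ not proportional to a point of the B₃
configuration, and rank exactly 4 at the points of the B₃ configuration:
dim Osc²_Q(X_{B₃}') = 4 for Q ∉ Z and = 3 for Q ∈ Z. -/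
theorem companion_hessian_rank :
    (∀ v : Fin 3 → ℂ, v ≠ 0 → (¬ ∃ (i : Fin 9) (t : ℂ), v = t • B3points i) →
      (companionHessian v).rank = 5) ∧
    (∀ v : Fin 3 → ℂ, (∃ (i : Fin 9) (t : ℂ), t ≠ 0 ∧ v = t • B3points i) →
      (companionHessian v).rank = 4) := by
  constructor
  · -- generic points: rank 5
    intro v hv hz
    rw [hessian_eq v]
    by_cases ha : v 0 = 0
    · -- a = 0
      have hb : v 1 ≠ 0 := by
        intro hb
        exact hz ⟨2, v 2, vec3_eq _ _ (by simp [B3_2, ha]) (by simp [B3_2, hb]) (by simp [B3_2])⟩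
      have hc : v 2 ≠ 0 := by
        intro hc
        exact hz ⟨1, v 1, vec3_eq _ _ (by simp [B3_1, ha]) (by simp [B3_1]) (by simp [B3_1, hc])⟩
      have h1 : v 1 - v 2 ≠ 0 := by
        intro h
        have h' : v 2 = v 1 := by linear_combination -h
        exact hz ⟨7, v 1, vec3_eq _ _ (by simp [B3_7, ha]) (by simp [B3_7]) (by simp [B3_7, h'])⟩
      have h2 : v 1 + v 2 ≠ 0 := by
        intro h
        have h' : v 2 = -(v 1) := by linear_combination h
        exact hz ⟨8, v 1, vec3_eq _ _ (by simp [B3_8, ha]) (by simp [B3_8]) (by simp [B3_8, h'])⟩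
      apply le_antisymm
      · exact rank_le_five_of_mulVec (wB_ne hb (v 0) (v 2)) (kerB (v 0) (v 1) (v 2))
      · apply le_rank_of_submatrix _ ![1,2,3,4,5] ![0,1,2,3,5]
        rw [det5B]
        exact mul_ne_zero (mul_ne_zero (mul_ne_zero (mul_ne_zero (by norm_num)
          (pow_ne_zero 2 hb)) hc) h1) h2
    · by_cases hb : v 1 = 0
      · -- b = 0, a ≠ 0
        have hc : v 2 ≠ 0 := by
          intro hc
          exact hz ⟨0, v 0, vec3_eq _ _ (by simp [B3_0]) (by simp [B3_0, hb]) (by simp [B3_0, hc])⟩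
        have h1 : v 2 - v 0 ≠ 0 := by
          intro h
          have h' : v 2 = v 0 := by linear_combination h
          exact hz ⟨5, v 0, vec3_eq _ _ (by simp [B3_5]) (by simp [B3_5, hb]) (by simp [B3_5, h'])⟩
        have h2 : v 2 + v 0 ≠ 0 := by
          intro h
          have h' : v 2 = -(v 0) := by linear_combination h
          exact hz ⟨6, v 0, vec3_eq _ _ (by simp [B3_6]) (by simp [B3_6, hb]) (by simp [B3_6, h'])⟩
        apply le_antisymm
        · exact rank_le_five_of_mulVec (wA_ne ha (v 1) (v 2)) (kerA (v 0) (v 1) (v 2))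
        · apply le_rank_of_submatrix _ ![0,2,3,4,5] ![0,1,2,3,4]
          rw [det5C]
          exact mul_ne_zero (mul_ne_zero (mul_ne_zero (mul_ne_zero (by norm_num)
            (pow_ne_zero 2 ha)) hc) h1) h2
      · by_cases hc : v 2 = 0
        · -- c = 0, a ≠ 0, b ≠ 0
          have h1 : v 1 - v 0 ≠ 0 := by
            intro h
            have h' : v 1 = v 0 := by linear_combination h
            exact hz ⟨3, v 0, vec3_eq _ _ (by simp [B3_3]) (by simp [B3_3, h']) (by simp [B3_3, hc])⟩
          have h2 : v 1 + v 0 ≠ 0 := by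
            intro h
            have h' : v 1 = -(v 0) := by linear_combination h
            exact hz ⟨4, v 0, vec3_eq _ _ (by simp [B3_4]) (by simp [B3_4, h']) (by simp [B3_4, hc])⟩
          apply le_antisymm
          · exact rank_le_five_of_mulVec (wA_ne ha (v 1) (v 2)) (kerA (v 0) (v 1) (v 2))
          · apply le_rank_of_submatrix _ ![0,1,3,4,5] ![0,1,2,3,4]
            rw [det5D]
            exact mul_ne_zero (mul_ne_zero (mul_ne_zero (mul_ne_zero (by norm_num)
              (pow_ne_zero 2 ha)) hb) h1) h2
        · -- a, b, c all nonzero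
          apply le_antisymm
          · exact rank_le_five_of_mulVec (wA_ne ha (v 1) (v 2)) (kerA (v 0) (v 1) (v 2))
          · apply le_rank_of_submatrix _ ![0,1,2,4,5] ![0,1,2,4,5]
            rw [det5A]
            exact mul_ne_zero (mul_ne_zero (mul_ne_zero (by norm_num)
              (pow_ne_zero 2 ha)) hb) (pow_ne_zero 2 hc)
  · -- configuration points: rank 4
    rintro v ⟨i, t, ht, rfl⟩
    rw [hessian_eq]
    fin_cases i
    · show (Hmat ((t • B3points 0) 0) ((t • B3points 0) 1) ((t • B3points 0) 2)).rank = 4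
      rw [show ((t • B3points 0) 0) = t * 1 by simp [B3_0],
        show ((t • B3points 0) 1) = t * 0 by simp [B3_0],
        show ((t • B3points 0) 2) = t * 0 by simp [B3_0],
        Hmat_smul, rank_smul_eq' ht, rankP0]
    · show (Hmat ((t • B3points 1) 0) ((t • B3points 1) 1) ((t • B3points 1) 2)).rank = 4
      rw [show ((t • B3points 1) 0) = t * 0 by simp [B3_1],
        show ((t • B3points 1) 1) = t * 1 by simp [B3_1],
        show ((t • B3points 1) 2) = t * 0 by simp [B3_1],
        Hmat_smul, rank_smul_eq' ht, rankP1]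
    · show (Hmat ((t • B3points 2) 0) ((t • B3points 2) 1) ((t • B3points 2) 2)).rank = 4
      rw [show ((t • B3points 2) 0) = t * 0 by simp [B3_2],
        show ((t • B3points 2) 1) = t * 0 by simp [B3_2],
        show ((t • B3points 2) 2) = t * 1 by simp [B3_2],
        Hmat_smul, rank_smul_eq' ht, rankP2]
    · show (Hmat ((t • B3points 3) 0) ((t • B3points 3) 1) ((t • B3points 3) 2)).rank = 4
      rw [show ((t • B3points 3) 0) = t * 1 by simp [B3_3],
        show ((t • B3points 3) 1) = t * 1 by simp [B3_3],
        show ((t • B3points 3) 2) = t * 0 by simp [B3_3],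
        Hmat_smul, rank_smul_eq' ht, rankP3]
    · show (Hmat ((t • B3points 4) 0) ((t • B3points 4) 1) ((t • B3points 4) 2)).rank = 4
      rw [show ((t • B3points 4) 0) = t * 1 by simp [B3_4],
        show ((t • B3points 4) 1) = t * (-1) by simp [B3_4],
        show ((t • B3points 4) 2) = t * 0 by simp [B3_4],
        Hmat_smul, rank_smul_eq' ht, rankP4]
    · show (Hmat ((t • B3points 5) 0) ((t • B3points 5) 1) ((t • B3points 5) 2)).rank = 4
      rw [show ((t • B3points 5) 0) = t * 1 by simp [B3_5],
        show ((t • B3points 5) 1) = t * 0 by simp [B3_5],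
        show ((t • B3points 5) 2) = t * 1 by simp [B3_5],
        Hmat_smul, rank_smul_eq' ht, rankP5]
    · show (Hmat ((t • B3points 6) 0) ((t • B3points 6) 1) ((t • B3points 6) 2)).rank = 4
      rw [show ((t • B3points 6) 0) = t * 1 by simp [B3_6],
        show ((t • B3points 6) 1) = t * 0 by simp [B3_6],
        show ((t • B3points 6) 2) = t * (-1) by simp [B3_6],
        Hmat_smul, rank_smul_eq' ht, rankP6]
    · show (Hmat ((t • B3points 7) 0) ((t • B3points 7) 1) ((t • B3points 7) 2)).rank = 4
      rw [show ((t • B3points 7) 0) = t * 0 by simp [B3_7],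
        show ((t • B3points 7) 1) = t * 1 by simp [B3_7],
        show ((t • B3points 7) 2) = t * 1 by simp [B3_7],
        Hmat_smul, rank_smul_eq' ht, rankP7]
    · show (Hmat ((t • B3points 8) 0) ((t • B3points 8) 1) ((t • B3points 8) 2)).rank = 4
      rw [show ((t • B3points 8) 0) = t * 0 by simp [B3_8],
        show ((t • B3points 8) 1) = t * 1 by simp [B3_8],
        show ((t • B3points 8) 2) = t * (-1) by simp [B3_8],
        Hmat_smul, rank_smul_eq' ht, rankP8]
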